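/- Let Ω ⊂ ℝⁿ be a domain, 0 < s < 1, and T > 0. Suppose u : ℝⁿ × [0,∞) → ℝ is such that for each t, u(·,t) ∈ C^{1,1}_loc(Ω) ∩ 𝓛_{2s}, for each x ∈ Ω the map t ↦ u(x,t) is C¹ on [0,∞), and ∂u/∂t(x,t) + (−Δ)^s u(x,t) ≥ 0 for all (x,t) ∈ Ω × (0,∞). Assume u(x,t) ≥ 0 for all (x,t) ∈ ℝⁿ × [0,T], and suppose there exists (x₀,t₀) ∈ Ω × (0,T] with u(x₀,t₀) = 0. Then u(x,t₀) = 0 for almost every x ∈ ℝⁿ. -/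

import Mathlib

open MeasureTheory Filter Metric Topology Set

noncomputable section

/-- Euclidean space `ℝⁿ`. -/
abbrev Eucl (n : ℕ) := EuclideanSpace ℝ (Fin n)

/-- `v` is locally `C^{1,1}` on the open set `Ω`. -/
def C11loc {n : ℕ} (Ω : Set (Eucl n)) (v : Eucl n → ℝ) : Prop :=
  ∀ x ∈ Ω, ∃ r > 0, ball x r ⊆ Ω ∧ DifferentiableOn ℝ v (ball x r) ∧
    ∃ K : NNReal, LipschitzOnWith K (fderiv ℝ v) (ball x r)

/-- The tail-integrability class `𝓛_{2s}`. -/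
def L2s {n : ℕ} (s : ℝ) (v : Eucl n → ℝ) : Prop :=
  LocallyIntegrable v volume ∧
    Integrable (fun x => |v x| / (1 + ‖x‖ ^ ((n : ℝ) + 2 * s))) volume

/-- `L` is the value of the fractional Laplacian `(-Δ)^s v (x)`, defined as a
principal value:  `L = C_{n,s} P.V. ∫ (v(x) - v(y)) / |x-y|^{n+2s} dy`. -/
def IsFracLap {n : ℕ} (Cns s : ℝ) (v : Eucl n → ℝ) (x : Eucl n) (L : ℝ) : Prop :=
  Tendsto (fun ε : ℝ =>
      Cns * ∫ y in {y : Eucl n | ε < dist x y}, (v x - v y) / dist x y ^ ((n : ℝ) + 2 * s))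
    (𝓝[>] 0) (𝓝 L)

private lemma bound_aux {n : ℕ} (x₀ : Eucl n) {ε p : ℝ} (hε : 0 < ε) (hp : 0 < p) :
    ∃ c : ℝ, 0 < c ∧ ∀ y : Eucl n, ε < dist x₀ y →
      1 + ‖y‖ ^ p ≤ c * dist x₀ y ^ p := by
  refine ⟨(ε ^ p)⁻¹ + (‖x₀‖ / ε + 1) ^ p, by positivity, fun y hy => ?_⟩
  have hd0 : (0:ℝ) < dist x₀ y := hε.trans hy
  have hεp : (0:ℝ) < ε ^ p := Real.rpow_pos_of_pos hε p
  have h1 : (1:ℝ) ≤ (ε ^ p)⁻¹ * dist x₀ y ^ p := by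
    rw [← div_eq_inv_mul, le_div_iff₀ hεp, one_mul]
    exact Real.rpow_le_rpow hε.le hy.le hp.le
  have hx0 : ‖x₀‖ ≤ ‖x₀‖ / ε * dist x₀ y := by
    rw [div_mul_eq_mul_div, le_div_iff₀ hε]
    exact mul_le_mul_of_nonneg_left hy.le (norm_nonneg x₀)
  have hyle : ‖y‖ ≤ (‖x₀‖ / ε + 1) * dist x₀ y := by
    have h2 : ‖y‖ ≤ ‖x₀‖ + dist x₀ y := by
      have := dist_triangle (0 : Eucl n) x₀ y
      simpa [dist_zero_left] using this
    nlinarith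
  have h3 : ‖y‖ ^ p ≤ (‖x₀‖ / ε + 1) ^ p * dist x₀ y ^ p := by
    rw [← Real.mul_rpow (by positivity) hd0.le]
    exact Real.rpow_le_rpow (norm_nonneg y) hyle hp.le
  rw [add_mul]
  exact add_le_add h1 h3

/-- strong maximum principle for the parabolic fractional Laplacian:
if a nonnegative supersolution vanishes at an interior point `(x₀, t₀)`,
then `u(·, t₀) = 0` almost everywhere. -/
theorem parabolic_fracLap_strong_maximum_principle
    {n : ℕ} {s T Cns : ℝ} (hs : 0 < s) (hs1 : s < 1) (hT : 0 < T) (hCns : 0 < Cns)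
    {Ω : Set (Eucl n)} (hΩopen : IsOpen Ω) (hΩconn : IsConnected Ω)
    (u : Eucl n → ℝ → ℝ) (Lu : Eucl n → ℝ → ℝ)
    (hxreg : ∀ t : ℝ, 0 ≤ t → C11loc Ω (fun x => u x t) ∧ L2s s (fun x => u x t))
    (htreg : ∀ x ∈ Ω, ContDiffOn ℝ 1 (u x) (Set.Ici 0))
    (hLu : ∀ x ∈ Ω, ∀ t > (0 : ℝ), IsFracLap Cns s (fun y => u y t) x (Lu x t))
    (hpde : ∀ x ∈ Ω, ∀ t > (0 : ℝ), 0 ≤ deriv (u x) t + Lu x t)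
    (hnonneg : ∀ x : Eucl n, ∀ t ∈ Set.Icc (0 : ℝ) T, 0 ≤ u x t)
    {x₀ : Eucl n} {t₀ : ℝ} (hx₀ : x₀ ∈ Ω) (ht₀ : t₀ ∈ Set.Ioc (0 : ℝ) T)
    (hvanish : u x₀ t₀ = 0) :
    ∀ᵐ x : Eucl n ∂volume, u x t₀ = 0 := by
  obtain ⟨ht0, htT⟩ := ht₀
  have hp : (0:ℝ) < (n : ℝ) + 2 * s := by positivity
  set p : ℝ := (n : ℝ) + 2 * s with hpdef
  set v : Eucl n → ℝ := fun y => u y t₀ with hvdef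
  have hv0 : ∀ y, 0 ≤ v y := fun y => hnonneg y t₀ ⟨ht0.le, htT⟩
  have hL2 : L2s s v := (hxreg t₀ ht0.le).2
  have hvmeas : AEStronglyMeasurable v volume := hL2.1.aestronglyMeasurable
  set g : Eucl n → ℝ := fun y => v y / dist x₀ y ^ p with hgdef
  have hg0 : ∀ y, 0 ≤ g y := fun y => div_nonneg (hv0 y) (Real.rpow_nonneg dist_nonneg _)
  set S : ℝ → Set (Eucl n) := fun ε => {y | ε < dist x₀ y} with hSdef
  have hSopen : ∀ ε, IsOpen (S ε) := fun ε =>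
    isOpen_lt continuous_const (continuous_const.dist continuous_id)
  -- Step A: time derivative at (x₀, t₀) is nonpositive
  have hderiv : deriv (u x₀) t₀ ≤ 0 := by
    have hdiff : DifferentiableAt ℝ (u x₀) t₀ :=
      ((htreg x₀ hx₀).differentiableOn one_ne_zero).differentiableAt (Ici_mem_nhds ht0)
    have hslope := hasDerivAt_iff_tendsto_slope.1 hdiff.hasDerivAt
    have hslope' : Tendsto (slope (u x₀) t₀) (𝓝[<] t₀) (𝓝 (deriv (u x₀) t₀)) :=
      hslope.mono_left (nhdsWithin_mono _ fun t ht => ne_of_lt ht)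
    refine le_of_tendsto hslope' ?_
    filter_upwards [Ioo_mem_nhdsLT_of_mem (⟨ht0, le_rfl⟩ : t₀ ∈ Ioc 0 t₀)] with t ht
    have hut : 0 ≤ u x₀ t := hnonneg x₀ t ⟨ht.1.le, ht.2.le.trans htT⟩
    rw [slope_def_field, hvanish, sub_zero]
    exact div_nonpos_of_nonneg_of_nonpos hut (sub_nonpos.2 ht.2.le)
  -- Step B: Lu x₀ t₀ ≥ 0 from the PDE
  have hLnn : 0 ≤ Lu x₀ t₀ := by have := hpde x₀ hx₀ t₀ ht0; linarith
  have hT0 := hLu x₀ hx₀ t₀ ht0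
  -- Step C: each truncated integral is nonpositive, hence Lu x₀ t₀ ≤ 0
  have hfun : ∀ ε : ℝ,
      (Cns * ∫ y in {y : Eucl n | ε < dist x₀ y},
        ((fun y => u y t₀) x₀ - u y t₀) / dist x₀ y ^ ((n : ℝ) + 2 * s))
        = -(Cns * ∫ y in S ε, g y) := by
    intro ε
    have : (fun y => ((fun y => u y t₀) x₀ - u y t₀) / dist x₀ y ^ ((n : ℝ) + 2 * s))
        = fun y => -(g y) := by
      funext y
      simp only [hgdef, hvdef]
      rw [show u x₀ t₀ = 0 from hvanish, zero_sub, neg_div]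
    rw [show {y : Eucl n | ε < dist x₀ y} = S ε from rfl]
    rw [this, integral_neg]
    ring
  have hLnp : Lu x₀ t₀ ≤ 0 := by
    refine le_of_tendsto hT0 ?_
    filter_upwards [self_mem_nhdsWithin] with ε hε
    rw [hfun ε, neg_nonpos]
    exact mul_nonneg hCns.le (setIntegral_nonneg (hSopen ε).measurableSet fun y _ => hg0 y)
  have hLzero : Lu x₀ t₀ = 0 := le_antisymm hLnp hLnn
  -- Step D: the truncated integrals tend to 0
  have hTI : Tendsto (fun ε => ∫ y in S ε, g y) (𝓝[>] (0:ℝ)) (𝓝 0) := by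
    rw [hLzero] at hT0
    have h1 : Tendsto (fun ε : ℝ => -(Cns * ∫ y in S ε, g y)) (𝓝[>] (0:ℝ)) (𝓝 0) := by
      have : (fun ε : ℝ =>
          Cns * ∫ y in {y : Eucl n | ε < dist x₀ y},
            ((fun y => u y t₀) x₀ - u y t₀) / dist x₀ y ^ ((n : ℝ) + 2 * s))
          = fun ε : ℝ => -(Cns * ∫ y in S ε, g y) := funext fun ε => hfun ε
      rw [← this]
      exact hT0
    have h2 := h1.neg
    simp only [neg_neg, neg_zero] at h2
    have h3 := h2.const_mul Cns⁻¹
    simp only [mul_zero] at h3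
    have : (fun ε : ℝ => Cns⁻¹ * (Cns * ∫ y in S ε, g y)) = fun ε => ∫ y in S ε, g y := by
      funext ε
      rw [← mul_assoc, inv_mul_cancel₀ hCns.ne', one_mul]
    rwa [this] at h3
  -- Step E: integrability of g on each S ε
  have hint : ∀ ε : ℝ, 0 < ε → IntegrableOn g (S ε) volume := by
    intro ε hε
    obtain ⟨c, hc, hbound⟩ := bound_aux x₀ hε hp
    have hGint : Integrable (fun y => c * (|v y| / (1 + ‖y‖ ^ p)))
        (volume.restrict (S ε)) := (hL2.2.restrict).const_mul c
    have hdmeas : Measurable fun y : Eucl n => dist x₀ y ^ p :=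
      ((continuous_const.dist continuous_id).rpow_const fun y => Or.inr hp.le).measurable
    have hmeas : AEStronglyMeasurable g (volume.restrict (S ε)) :=
      ((hvmeas.aemeasurable.div hdmeas.aemeasurable).aestronglyMeasurable).restrict
    refine Integrable.mono' hGint hmeas ?_
    filter_upwards [ae_restrict_mem (hSopen ε).measurableSet] with y hy
    have hdp : (0:ℝ) < dist x₀ y ^ p := Real.rpow_pos_of_pos (hε.trans hy) p
    have hN : (0:ℝ) < 1 + ‖y‖ ^ p := by positivity
    have key : (1:ℝ) / dist x₀ y ^ p ≤ c / (1 + ‖y‖ ^ p) := by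
      rw [div_le_div_iff₀ hdp hN, one_mul]
      calc 1 + ‖y‖ ^ p ≤ c * dist x₀ y ^ p := hbound y hy
        _ = c * dist x₀ y ^ p := rfl
    have habs : ‖g y‖ = v y / dist x₀ y ^ p := by
      rw [Real.norm_eq_abs, abs_of_nonneg (hg0 y)]
    rw [habs, abs_of_nonneg (hv0 y)]
    calc v y / dist x₀ y ^ p = v y * (1 / dist x₀ y ^ p) := by ring
      _ ≤ v y * (c / (1 + ‖y‖ ^ p)) := mul_le_mul_of_nonneg_left key (hv0 y)
      _ = c * (v y / (1 + ‖y‖ ^ p)) := by ring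
  -- Step F/G: each truncated integral vanishes, so v = 0 a.e. on each S ε
  have hae : ∀ ε : ℝ, 0 < ε → ∀ᵐ y ∂(volume : Measure (Eucl n)), y ∈ S ε → v y = 0 := by
    intro ε hε
    have hle : (∫ y in S ε, g y) ≤ 0 := by
      refine ge_of_tendsto hTI ?_
      filter_upwards [Ioo_mem_nhdsGT_of_mem (⟨le_rfl, hε⟩ : (0:ℝ) ∈ Ico 0 ε)] with ε' hε'
      refine setIntegral_mono_set (hint ε' hε'.1) (Eventually.of_forall hg0) ?_
      exact HasSubset.Subset.eventuallyLE fun y hy => hε'.2.trans hy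
    have hge : 0 ≤ ∫ y in S ε, g y :=
      setIntegral_nonneg (hSopen ε).measurableSet fun y _ => hg0 y
    have hzero : (∫ y in S ε, g y) = 0 := le_antisymm hle hge
    have hg_ae := (integral_eq_zero_iff_of_nonneg (fun y => hg0 y) (hint ε hε)).1 hzero
    rw [EventuallyEq, ae_restrict_iff' (hSopen ε).measurableSet] at hg_ae
    filter_upwards [hg_ae] with y hy hyS
    have h := hy hyS
    have hdp : (0:ℝ) < dist x₀ y ^ p := Real.rpow_pos_of_pos (hε.trans hyS) p
    have hgy : v y / dist x₀ y ^ p = 0 := h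
    rcases div_eq_zero_iff.1 hgy with h' | h'
    · exact h'
    · exact absurd h' hdp.ne'
  -- Step H: conclude
  have hcount : ∀ᵐ y ∂(volume : Measure (Eucl n)),
      ∀ k : ℕ, y ∈ S (1 / ((k : ℝ) + 1)) → v y = 0 :=
    ae_all_iff.2 fun k => hae _ (by positivity)
  filter_upwards [hcount] with y hy
  by_cases hyx : dist x₀ y = 0
  · have hyx' : y = x₀ := (dist_eq_zero.1 hyx).symm
    show u y t₀ = 0
    rw [hyx']
    exact hvanish
  · have hdpos : 0 < dist x₀ y := lt_of_le_of_ne dist_nonneg (Ne.symm hyx)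
    obtain ⟨k, hk⟩ := exists_nat_one_div_lt hdpos
    exact hy k hk
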